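/- The function f(x) = arctan( x·(8 + a(x))/(π² − 4x²) ) − x is strictly increasing on the interval (0.373, π/2), where a(x) = (8/π)(π/2 − x) + (16/π² − 8/3)(π/2 − x)². -/

import Mathlib

set_option maxHeartbeats 2000000

open Real

lemma q3pos (x : ℝ) (hx1 : 0.373 < x) (hx2 : x < π / 2) :
    0 < 144*π^3 - 15*π^5 + (432*π^2 - 42*π^4)*x + (-432*π + 96*π^3 - 4*π^5)*x^2
      + (288 - 96*π^2 + 8*π^4)*x^3 := by
  have h1 : (3.141592 : ℝ) < π := Real.pi_gt_d6
  have h2 : π < 3.141593 := Real.pi_lt_d6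
  have hp0 : (0:ℝ) < π := by linarith
  have hp2l : (9.8696002:ℝ) < π^2 := by nlinarith
  have hp2u : π^2 < 9.8696066 := by nlinarith
  have hp3l : (31.0062573:ℝ) < π^3 := by nlinarith
  have hp3u : π^3 < 31.0062870 := by nlinarith
  have hp4l : (97.4090099:ℝ) < π^4 := by nlinarith
  have hp4u : π^4 < 97.4091340 := by nlinarith
  have hp5l : (306.0193664:ℝ) < π^5 := by nlinarith
  have hp5u : π^5 < 306.0198536 := by nlinarith
  have hc3 : (119.7898:ℝ) < 288 - 96*π^2 + 8*π^4 := by nlinarith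
  have hc2 : (395.3531:ℝ) < -432*π + 96*π^3 - 4*π^5 := by nlinarith
  have hc1 : (172.4836:ℝ) < 432*π^2 - 42*π^4 := by nlinarith
  have hc0 : (-125.3968:ℝ) < 144*π^3 - 15*π^5 := by nlinarith
  have hx0 : (0:ℝ) < x := by linarith
  have ht : (0:ℝ) < x - 0.373 := by linarith
  have hx2p : (0:ℝ) < x^2 := by positivity
  have hx3p : (0:ℝ) < x^3 := by positivity
  have e1 : 172.4836*x < (432*π^2 - 42*π^4)*x := mul_lt_mul_of_pos_right hc1 hx0
  have e2 : 395.3531*x^2 < (-432*π + 96*π^3 - 4*π^5)*x^2 := mul_lt_mul_of_pos_right hc2 hx2p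
  have e3 : 119.7898*x^3 < (288 - 96*π^2 + 8*π^4)*x^3 := mul_lt_mul_of_pos_right hc3 hx3p
  have base : (0:ℝ) < -125.3968 + 172.4836*x + 395.3531*x^2 + 119.7898*x^3 := by
    nlinarith [mul_pos ht ht, mul_pos (mul_pos ht ht) ht]
  linarith

lemma hasDerivF (x : ℝ) (hx0 : 0 < x) (hx2 : x < π / 2) :
    HasDerivAt (fun x : ℝ =>
      Real.arctan (x * (8 + ((8 / π) * (π / 2 - x) + (16 / π ^ 2 - 8 / 3) * (π / 2 - x) ^ 2)) /
        (π ^ 2 - 4 * x ^ 2)) - x)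
      (1 / (1 + (x * (8 + ((8 / π) * (π / 2 - x) + (16 / π ^ 2 - 8 / 3) * (π / 2 - x) ^ 2)) /
        (π ^ 2 - 4 * x ^ 2)) ^ 2) *
       ((((8 + ((8 / π) * (π / 2 - x) + (16 / π ^ 2 - 8 / 3) * (π / 2 - x) ^ 2)) +
          x * (-(8 / π) + (16 / π ^ 2 - 8 / 3) * (2 * (π / 2 - x) * (-1)))) * (π ^ 2 - 4 * x ^ 2) -
          x * (8 + ((8 / π) * (π / 2 - x) + (16 / π ^ 2 - 8 / 3) * (π / 2 - x) ^ 2)) * (-(8 * x))) /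
        (π ^ 2 - 4 * x ^ 2) ^ 2) - 1) x := by
  have hpi : (0:ℝ) < π := Real.pi_pos
  have hD : (0:ℝ) < π ^ 2 - 4 * x ^ 2 := by
    nlinarith [mul_pos (by linarith : (0:ℝ) < π - 2*x) (by linarith : (0:ℝ) < π + 2*x)]
  have hL : HasDerivAt (fun x : ℝ => π / 2 - x) (-1) x := (hasDerivAt_id x).const_sub (π / 2)
  have hA : HasDerivAt (fun x : ℝ => 8 + ((8 / π) * (π / 2 - x) + (16 / π ^ 2 - 8 / 3) * (π / 2 - x) ^ 2))
      (-(8 / π) + (16 / π ^ 2 - 8 / 3) * (2 * (π / 2 - x) * (-1))) x := by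
    have h1 := hL.const_mul (8 / π)
    have h2 := (hL.pow 2).const_mul (16 / π ^ 2 - 8 / 3)
    have := (h1.add h2).const_add 8
    refine this.congr_deriv ?_
    push_cast
    ring
  have hN : HasDerivAt (fun x : ℝ => x * (8 + ((8 / π) * (π / 2 - x) + (16 / π ^ 2 - 8 / 3) * (π / 2 - x) ^ 2)))
      (1 * (8 + ((8 / π) * (π / 2 - x) + (16 / π ^ 2 - 8 / 3) * (π / 2 - x) ^ 2)) +
        x * (-(8 / π) + (16 / π ^ 2 - 8 / 3) * (2 * (π / 2 - x) * (-1)))) x :=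
    (hasDerivAt_id x).mul hA
  have hDD : HasDerivAt (fun x : ℝ => π ^ 2 - 4 * x ^ 2) (-(8 * x)) x := by
    have := ((hasDerivAt_pow 2 x).const_mul 4).const_sub (π ^ 2)
    refine this.congr_deriv ?_
    push_cast
    ring
  have hu := hN.div hDD (ne_of_gt hD)
  have harc := hu.arctan
  have := harc.sub (hasDerivAt_id x)
  refine this.congr_deriv ?_
  simp only [Pi.div_apply]
  ring

theorem stmt9 :
    StrictMonoOn (fun x : ℝ =>
      Real.arctan (x * (8 + ((8 / π) * (π / 2 - x) + (16 / π ^ 2 - 8 / 3) * (π / 2 - x) ^ 2)) /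
        (π ^ 2 - 4 * x ^ 2)) - x)
      (Set.Ioo 0.373 (π / 2)) := by
  have hpi : (0:ℝ) < π := Real.pi_pos
  apply strictMonoOn_of_deriv_pos (convex_Ioo _ _)
  · intro x hx
    exact (hasDerivF x (by have := hx.1; norm_num at this ⊢; linarith) hx.2).continuousAt.continuousWithinAt
  · intro x hx
    rw [interior_Ioo] at hx
    obtain ⟨hx1, hx2⟩ := hx
    have hx0 : (0:ℝ) < x := by have : (0.373:ℝ) < x := hx1; linarith [this]
    rw [(hasDerivF x hx0 hx2).deriv]
    set N := x * (8 + ((8 / π) * (π / 2 - x) + (16 / π ^ 2 - 8 / 3) * (π / 2 - x) ^ 2)) with hNdef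
    set N' := (8 + ((8 / π) * (π / 2 - x) + (16 / π ^ 2 - 8 / 3) * (π / 2 - x) ^ 2)) +
      x * (-(8 / π) + (16 / π ^ 2 - 8 / 3) * (2 * (π / 2 - x) * (-1))) with hN'def
    set D := π ^ 2 - 4 * x ^ 2 with hDdef
    have hD : (0:ℝ) < D := by
      rw [hDdef]
      nlinarith [mul_pos (by linarith : (0:ℝ) < π - 2*x) (by linarith : (0:ℝ) < π + 2*x)]
    -- key algebraic identity
    have hQ := q3pos x hx1 hx2
    have key : 9*π^4*((N' * D - N * (-(8 * x))) - D^2 - N^2)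
        = (π - 2*x)^3 * (144*π^3 - 15*π^5 + (432*π^2 - 42*π^4)*x + (-432*π + 96*π^3 - 4*π^5)*x^2
          + (288 - 96*π^2 + 8*π^4)*x^3) := by
      rw [hNdef, hN'def, hDdef]
      field_simp
      ring
    have hP : D^2 + N^2 < N' * D - N * (-(8 * x)) := by
      have h9 : (0:ℝ) < 9*π^4 := by positivity
      have hcube : (0:ℝ) < (π - 2*x)^3 := pow_pos (by linarith : (0:ℝ) < π - 2*x) 3
      nlinarith [mul_pos hcube hQ]
    have h1u : (0:ℝ) < 1 + (N / D) ^ 2 := by positivity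
    have hD2 : (0:ℝ) < D^2 := by positivity
    have step : (1 + (N / D) ^ 2) < (N' * D - N * (-(8 * x))) / D ^ 2 := by
      rw [lt_div_iff₀ hD2]
      have : (1 + (N / D) ^ 2) * D ^ 2 = D^2 + N^2 := by
        field_simp
      rw [this]
      exact hP
    have : 1 < 1 / (1 + (N / D) ^ 2) * ((N' * D - N * (-(8 * x))) / D ^ 2) := by
      rw [one_div, inv_mul_eq_div, lt_div_iff₀ h1u, one_mul]
      exact step
    linarith
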